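/- Let o be the ring of integers of a non-archimedean local field with residue cardinality q and uniformizer ϖ. Let E/F be an unramified quadratic extension with ring of integers O = o[θ] where θ² − bθ + a = 0, and let β = θ. For integers n ≥ 1 and l ≥ n, the quantity N_∞(r; n, l) := |{α ∈ o/ϖ^n o : a·ϖ^{2r} − α·b·ϖ^r + α² ∈ ϖ^{n+r−l}o}| equals q^n for 0 ≤ r ≤ l − n and equals q^{⌊(n+l−r)/2⌋} for l − n < r ≤ l. Here the key identity is a·ϖ^{2r} − α·b·ϖ^r + α² = Nm_{E/F}(α − θ·ϖ^r), so the condition is equivalent to 2·min(v(α), r) ≥ n + r − l. -/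

import Mathlib

/-- Cardinality of `R ⧸ (ϖ)^n` is `q^n` when `R ⧸ (ϖ)` has cardinality `q`. -/
theorem stmt_6_cardAux {R : Type*} [CommRing R] [IsDomain R] {ϖ : R} (hϖ : Irreducible ϖ)
    {q : ℕ} (hq : Nat.card (R ⧸ Ideal.span {ϖ}) = q) (n : ℕ) :
    Nat.card (R ⧸ Ideal.span {ϖ} ^ n) = q ^ n := by
  induction n with
  | zero =>
      rw [pow_zero, pow_zero, Ideal.one_eq_top, Nat.card_eq_one_iff_unique]
      exact ⟨Ideal.Quotient.subsingleton_iff.mpr rfl, ⟨0⟩⟩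
  | succ n ih =>
      set I : Ideal R := Ideal.span {ϖ} with hI
      have hbot : I ≠ ⊥ := by
        simp [hI, Ideal.span_singleton_eq_bot, hϖ.ne_zero]
      have hprin : I.IsPrincipal := ⟨⟨ϖ, rfl⟩⟩
      set J : Ideal (R ⧸ I ^ (n+1)) := Ideal.map (Ideal.Quotient.mk (I ^ (n+1))) (I ^ n) with hJ
      have e1 : (R ⧸ I) ≃ J :=
        (Ideal.quotEquivPowQuotPowSuccEquiv hprin hbot n).trans
          (Ideal.powQuotPowSuccEquivMapMkPowSuccPow I n)
      have e3 : ((R ⧸ I ^ (n+1)) ⧸ J) ≃+* (R ⧸ I ^ n) :=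
        DoubleQuot.quotQuotEquivQuotOfLE (Ideal.pow_le_pow_right (Nat.le_succ n))
      have key : Nat.card (R ⧸ I ^ (n+1)) =
          Nat.card ((R ⧸ I ^ (n+1)) ⧸ J.toAddSubgroup) * Nat.card J.toAddSubgroup :=
        AddSubgroup.card_eq_card_quotient_mul_card_addSubgroup _
      have h1 : Nat.card ((R ⧸ I ^ (n+1)) ⧸ J.toAddSubgroup) =
          Nat.card ((R ⧸ I ^ (n+1)) ⧸ J) := rfl
      have h2 : Nat.card J.toAddSubgroup = Nat.card J := rfl
      rw [h1, h2, Nat.card_congr e3.toEquiv, ih, ← Nat.card_congr e1, hq] at key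
      rw [key, pow_succ]

/-- The number of residues in `R ⧸ (ϖ^n)` divisible by `ϖ^k` is `q^(n-k)`. -/
theorem stmt_6_cardDiv {R : Type*} [CommRing R] [IsDomain R] {ϖ : R} (hϖ : Irreducible ϖ)
    {q : ℕ} (hq : Nat.card (R ⧸ Ideal.span {ϖ}) = q) {n k : ℕ} (hk : k ≤ n) :
    Nat.card {α : R ⧸ Ideal.span {ϖ ^ n} //
      ∃ x : R, Ideal.Quotient.mk (Ideal.span {ϖ ^ n}) x = α ∧ ϖ ^ k ∣ x} = q ^ (n - k) := by
  set J : Ideal R := Ideal.span {ϖ ^ n} with hJdef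
  set J' : Ideal R := Ideal.span {ϖ ^ (n - k)} with hJ'def
  have hle : J' ≤ Submodule.comap (LinearMap.mulRight R (ϖ ^ k)) J := by
    intro y hy
    rw [hJ'def, Ideal.mem_span_singleton] at hy
    obtain ⟨c, rfl⟩ := hy
    simp only [Submodule.mem_comap, LinearMap.mulRight_apply, hJdef, Ideal.mem_span_singleton]
    exact ⟨c, by
      rw [show (ϖ:R)^n = ϖ^(n-k)*ϖ^k from by rw [← pow_add, Nat.sub_add_cancel hk]]; ring⟩
  set g : (R ⧸ J') →ₗ[R] (R ⧸ J) := Submodule.mapQ J' J (LinearMap.mulRight R (ϖ ^ k)) hle with hg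
  have hgmk : ∀ y : R, g (Ideal.Quotient.mk J' y) = Ideal.Quotient.mk J (y * ϖ ^ k) := by
    intro y
    rfl
  set F : (R ⧸ J') → {α : R ⧸ J // ∃ x : R, Ideal.Quotient.mk J x = α ∧ ϖ ^ k ∣ x} :=
    fun z => ⟨g z, by
      obtain ⟨y, rfl⟩ := Ideal.Quotient.mk_surjective z
      exact ⟨y * ϖ ^ k, (hgmk y).symm, ⟨y, mul_comm _ _⟩⟩⟩ with hF
  have hbij : Function.Bijective F := by
    constructor
    · intro z₁ z₂ h
      obtain ⟨y₁, rfl⟩ := Ideal.Quotient.mk_surjective z₁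
      obtain ⟨y₂, rfl⟩ := Ideal.Quotient.mk_surjective z₂
      have : g (Ideal.Quotient.mk J' y₁) = g (Ideal.Quotient.mk J' y₂) :=
        congrArg Subtype.val h
      rw [hgmk, hgmk, Ideal.Quotient.eq, hJdef, Ideal.mem_span_singleton] at this
      obtain ⟨c, hc⟩ := this
      rw [Ideal.Quotient.eq, hJ'def, Ideal.mem_span_singleton]
      refine ⟨c, ?_⟩
      have hne : (ϖ : R) ^ k ≠ 0 := pow_ne_zero _ hϖ.ne_zero
      apply mul_right_cancel₀ hne
      calc (y₁ - y₂) * ϖ ^ k = y₁ * ϖ ^ k - y₂ * ϖ ^ k := by ring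
        _ = ϖ ^ (n - k) * c * ϖ ^ k := by
            rw [hc]
            rw [show (ϖ:R)^n = ϖ^(n-k)*ϖ^k from by rw [← pow_add, Nat.sub_add_cancel hk]]
            ring
    · rintro ⟨α, x, hx, c, rfl⟩
      refine ⟨Ideal.Quotient.mk J' c, ?_⟩
      apply Subtype.ext
      simp only [F, hgmk c]
      rw [← hx]
      congr 1
      ring
  rw [Nat.card_congr (Equiv.ofBijective F hbij).symm]
  have := stmt_6_cardAux hϖ hq (n - k)
  rwa [Ideal.span_singleton_pow] at this

/-- Unramified-case counting: for `O = o[θ]` the ring of integers of an unramified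
quadratic extension, `θ² - bθ + a = 0`, `n ≥ 1`, `l ≥ n` and `r ≤ l`, the number of
`α ∈ o/ϖ^n` with `aϖ^{2r} - αbϖ^r + α² ∈ ϖ^{n+r-l} o` is `q^n` for `0 ≤ r ≤ l - n`
and `q^{⌊(n+l-r)/2⌋}` for `l - n < r ≤ l`. -/
theorem stmt_6 (O : Type*) [CommRing O] [IsDomain O] [IsDiscreteValuationRing O]
    (o : Subring O) [IsDomain o] [IsDiscreteValuationRing o]
    (ϖ : o) (hϖo : Irreducible ϖ) (hϖO : Irreducible (ϖ : O))
    (a b : o) (θ : O) (hθ : θ ^ 2 - (b : O) * θ + (a : O) = 0)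
    (hgen : ∀ x : O, ∃ c d : o, x = (c : O) + (d : O) * θ)
    (q : ℕ) (hq1 : 1 < q)
    (hqo : Nat.card (o ⧸ Ideal.span {ϖ}) = q)
    (hqO : Nat.card (O ⧸ Ideal.span {(ϖ : O)}) = q ^ 2)
    (n l r : ℕ) (hn : 1 ≤ n) (hl : n ≤ l) (hr : r ≤ l) :
    Nat.card {α : o ⧸ Ideal.span {ϖ ^ n} //
        ∃ x : o, Ideal.Quotient.mk (Ideal.span {ϖ ^ n}) x = α ∧
          a * ϖ ^ (2 * r) - x * b * ϖ ^ r + x ^ 2 ∈ Ideal.span {ϖ ^ (n + r - l)}}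
      = if n + r ≤ l then q ^ n else q ^ ((n + l - r) / 2) := by
  by_cases hcase : n + r ≤ l
  · rw [if_pos hcase]
    have hm : n + r - l = 0 := by omega
    have hall : ∀ α : o ⧸ Ideal.span {ϖ ^ n},
        ∃ x : o, Ideal.Quotient.mk (Ideal.span {ϖ ^ n}) x = α ∧
          a * ϖ ^ (2 * r) - x * b * ϖ ^ r + x ^ 2 ∈ Ideal.span {ϖ ^ (n + r - l)} := by
      intro α
      obtain ⟨x, rfl⟩ := Ideal.Quotient.mk_surjective α
      refine ⟨x, rfl, ?_⟩
      rw [hm, pow_zero, Ideal.mem_span_singleton]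
      exact one_dvd _
    rw [Nat.card_congr (Equiv.subtypeUnivEquiv hall)]
    have := stmt_6_cardAux hϖo hqo n
    rwa [Ideal.span_singleton_pow] at this
  · rw [if_neg hcase]
    push_neg at hcase
    set m := n + r - l with hmdef
    set k := (m + 1) / 2 with hkdef
    have hm1 : 1 ≤ m := by omega
    have hmr : m ≤ r := by omega
    have hkn : k ≤ n := by omega
    have key : ∀ x : o,
        (a * ϖ ^ (2 * r) - x * b * ϖ ^ r + x ^ 2 ∈ Ideal.span {ϖ ^ m}) ↔ ϖ ^ k ∣ x := by
      intro x
      rw [Ideal.mem_span_singleton]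
      constructor
      · intro hdvd
        by_contra hnd
        have hx0 : x ≠ 0 := by rintro rfl; exact hnd (dvd_zero _)
        obtain ⟨s, u, rfl⟩ := IsDiscreteValuationRing.eq_unit_mul_pow_irreducible hx0 hϖo
        have hs : s < k := by
          by_contra hsk
          push_neg at hsk
          exact hnd ((pow_dvd_pow ϖ hsk).trans ⟨↑u, mul_comm _ _⟩)
        have hsr : s < r := by omega
        have e1 : (ϖ:o)^(2*r) = ϖ^s*ϖ^s*(ϖ^(r-s)*ϖ^(r-s)) := by
          rw [← pow_add, ← pow_add, ← pow_add]; congr 1; omega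
        have e2 : (ϖ:o)^r = ϖ^s * ϖ^(r-s) := by rw [← pow_add]; congr 1; omega
        have hfact : a * ϖ ^ (2*r) - (↑u * ϖ^s) * b * ϖ^r + (↑u * ϖ^s)^2
            = ϖ^s * ϖ^s * (a * (ϖ^(r-s)*ϖ^(r-s)) - ↑u * b * ϖ^(r-s) + ↑u^2) := by
          rw [e1, e2]; ring
        rw [hfact] at hdvd
        obtain ⟨d, hd⟩ := hdvd
        set c : o := a * (ϖ^(r-s)*ϖ^(r-s)) - ↑u * b * ϖ^(r-s) + ↑u^2 with hcdef
        have h2s : 2*s + 1 ≤ m := by omega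
        have hϖc : (ϖ:o) ∣ c := by
          refine ⟨ϖ^(m - 2*s - 1)*d, ?_⟩
          have hne : (ϖ:o)^s * ϖ^s ≠ 0 :=
            mul_ne_zero (pow_ne_zero _ hϖo.ne_zero) (pow_ne_zero _ hϖo.ne_zero)
          apply mul_left_cancel₀ hne
          rw [hd]
          rw [show (ϖ:o)^m = ϖ^s * ϖ^s * (ϖ * ϖ^(m - 2*s - 1)) from by
            rw [← pow_add, ← pow_succ', ← pow_add]; congr 1; omega]
          ring
        have hsr1 : 1 ≤ r - s := by omega
        have hu2 : (ϖ:o) ∣ (↑u : o)^2 := by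
          have hj : (↑u : o)^2 = c - ϖ * (a * (ϖ^(r-s-1)*ϖ^(r-s)) - ↑u * b * ϖ^(r-s-1)) := by
            rw [hcdef, show (ϖ:o)^(r-s) = ϖ * ϖ^(r-s-1) from by
              rw [← pow_succ']; congr 1; omega]
            ring
          rw [hj]
          exact dvd_sub hϖc ⟨_, rfl⟩
        exact hϖo.not_isUnit (isUnit_of_dvd_unit hu2 (u.isUnit.pow 2))
      · rintro ⟨y, rfl⟩
        have d1 : (ϖ:o)^m ∣ a * ϖ ^ (2*r) := by
          exact Dvd.dvd.mul_left (pow_dvd_pow ϖ (by omega : m ≤ 2*r)) a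
        have d2 : (ϖ:o)^m ∣ (ϖ^k * y) * b * ϖ^r := by
          refine (pow_dvd_pow ϖ (by omega : m ≤ k + r)).trans ⟨y * b, ?_⟩
          rw [pow_add]; ring
        have d3 : (ϖ:o)^m ∣ (ϖ^k * y)^2 := by
          refine (pow_dvd_pow ϖ (by omega : m ≤ k + k)).trans ⟨y^2, ?_⟩
          rw [pow_add]; ring
        exact dvd_add (dvd_sub d1 d2) d3
    have hcongr : Nat.card {α : o ⧸ Ideal.span {ϖ ^ n} //
        ∃ x : o, Ideal.Quotient.mk (Ideal.span {ϖ ^ n}) x = α ∧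
          a * ϖ ^ (2 * r) - x * b * ϖ ^ r + x ^ 2 ∈ Ideal.span {ϖ ^ m}}
        = Nat.card {α : o ⧸ Ideal.span {ϖ ^ n} //
        ∃ x : o, Ideal.Quotient.mk (Ideal.span {ϖ ^ n}) x = α ∧ ϖ ^ k ∣ x} := by
      refine Nat.card_congr (Equiv.subtypeEquivRight fun α => ?_)
      exact exists_congr fun x => and_congr_right fun _ => key x
    rw [hcongr, stmt_6_cardDiv hϖo hqo hkn]
    congr 1
    omega
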